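/- Let 𝓡 be a finite set of finite relations over attribute set 𝓐, and let J = ⋈_{R∈𝓡} R be their natural join. For any relation R ∈ 𝓡, any sets A ⊆ B ⊆ attr(R), and any E ⊆ 𝓐, we have |π_{B∪E}(J)| ≤ |π_{A∪E}(J)| · d, where d = max_{v ∈ π_A(R)} deg(v, π_B(R), A) is the maximum number of tuples in π_B(R) projecting to any given value of A. -/

import Mathlib

open scoped Classical

/-- Projection of a total tuple onto an attribute set. -/
noncomputable def proj {α V : Type*} (A : Finset α) (t : α → V) : α → Option V :=
  fun a => if a ∈ A then some (t a) else none

/-- Projection of a partial tuple onto an attribute set. -/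
noncomputable def projO {α V : Type*} (A : Finset α) (t : α → Option V) : α → Option V :=
  fun a => if a ∈ A then t a else none

/-- For the natural join `J` of a finite family of finite relations covering the attributes,
a relation `R = Rel i₀` with `A ⊆ B ⊆ attr(i₀)`, any `E`, and `d` an upper bound on the
degree `deg(v, π_B(R), A)` of every value `v`, we have
`|π_{B∪E}(J)| ≤ |π_{A∪E}(J)| · d`. -/
theorem stmt13 {α V ι : Type*} [Fintype ι]
    (attr : ι → Finset α) (Rel : ι → Finset (α → Option V))
    (hcov : ∀ a : α, ∃ i, a ∈ attr i)
    (i₀ : ι) (A B : Finset α) (hAB : A ⊆ B) (hB : B ⊆ attr i₀) (E : Finset α)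
    (d : ℕ)
    (hd : ∀ v : α → Option V,
      (((Rel i₀).image (projO B)).filter (fun s => projO A s = v)).card ≤ d) :
    Set.ncard (proj (B ∪ E) '' {t : α → V | ∀ i, proj (attr i) t ∈ Rel i})
      ≤ Set.ncard (proj (A ∪ E) '' {t : α → V | ∀ i, proj (attr i) t ∈ Rel i}) * d := by
  classical
  set J : Set (α → V) := {t : α → V | ∀ i, proj (attr i) t ∈ Rel i} with hJ
  -- finiteness of the B ∪ E projection
  have hfin : (proj (B ∪ E) '' J).Finite := by
    set F : α → Finset (Option V) :=
      fun a => insert none ((Rel (hcov a).choose).image (fun s => s a)) with hF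
    have hsub : ∀ u ∈ proj (B ∪ E) '' J, ∀ a : α, u a ∈ F a := by
      rintro u ⟨t, ht, rfl⟩ a
      by_cases h : a ∈ B ∪ E
      · simp only [proj, if_pos h, hF]
        refine Finset.mem_insert_of_mem ?_
        refine Finset.mem_image.mpr ⟨proj (attr (hcov a).choose) t, ht _, ?_⟩
        simp [proj, (hcov a).choose_spec]
      · rw [Finset.mem_union, not_or] at h
        simp [proj, hF, h.1, h.2]
    have hinj : Set.InjOn (fun u : α → Option V => fun a : (B ∪ E : Finset α) => u a)
        (proj (B ∪ E) '' J) := by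
      rintro u ⟨t, ht, rfl⟩ u' ⟨t', ht', rfl⟩ h
      funext a
      by_cases ha : a ∈ B ∪ E
      · exact congrFun h ⟨a, ha⟩
      · rw [Finset.mem_union, not_or] at ha
        simp [proj, ha.1, ha.2]
    refine Set.Finite.of_finite_image ?_ hinj
    refine Set.Finite.subset
      (Set.Finite.pi (fun a : (B ∪ E : Finset α) => (F a.1).finite_toSet)) ?_
    rintro _ ⟨u, hu, rfl⟩ a _
    exact hsub u hu a.1
  set f : (α → Option V) → (α → Option V) := projO (A ∪ E) with hf
  have hcomp : ∀ t : α → V, f (proj (B ∪ E) t) = proj (A ∪ E) t := by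
    intro t; funext a
    by_cases h : a ∈ A ∪ E
    · have hb : a ∈ B ∪ E := by
        rcases Finset.mem_union.1 h with h' | h'
        · exact Finset.mem_union_left _ (hAB h')
        · exact Finset.mem_union_right _ h'
      simp [hf, projO, proj, h, hb]
    · simp [hf, projO, proj, h]
  have himg : f '' (proj (B ∪ E) '' J) = proj (A ∪ E) '' J := by
    ext v; constructor
    · rintro ⟨_, ⟨t, ht, rfl⟩, rfl⟩; exact ⟨t, ht, (hcomp t).symm⟩
    · rintro ⟨t, ht, rfl⟩; exact ⟨proj (B ∪ E) t, ⟨t, ht, rfl⟩, hcomp t⟩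
  set s := hfin.toFinset with hs
  have hsimg : ((s.image f : Finset _) : Set _) = proj (A ∪ E) '' J := by
    rw [Finset.coe_image, hs, hfin.coe_toFinset, himg]
  have hcard : s.card ≤ d * (s.image f).card := by
    apply Finset.card_le_mul_card_image
    intro v hv
    refine le_trans ?_ (hd (projO A v))
    apply Finset.card_le_card_of_injOn (projO B)
    · intro u hu
      rw [Finset.mem_coe, Finset.mem_filter] at hu
      obtain ⟨hus, hufv⟩ := hu
      rw [hs, Set.Finite.mem_toFinset] at hus
      obtain ⟨t, ht, rfl⟩ := hus
      rw [Finset.mem_coe, Finset.mem_filter]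
      constructor
      · refine Finset.mem_image.mpr ⟨proj (attr i₀) t, ht i₀, ?_⟩
        funext a
        by_cases h : a ∈ B
        · simp [projO, proj, h, hB h, Finset.mem_union_left _ h]
        · simp [projO, h]
      · rw [← hufv]
        funext a
        by_cases h : a ∈ A
        · simp [projO, hf, proj, h, hAB h, Finset.mem_union_left E (hAB h),
            Finset.mem_union_left E h]
        · simp [projO, h]
    · intro u1 h1 u2 h2 heq
      simp only [Finset.coe_filter, Set.mem_setOf_eq] at h1 h2
      obtain ⟨h1s, h1v⟩ := h1
      obtain ⟨h2s, h2v⟩ := h2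
      rw [hs, Set.Finite.mem_toFinset] at h1s h2s
      obtain ⟨t1, ht1, rfl⟩ := h1s
      obtain ⟨t2, ht2, rfl⟩ := h2s
      funext a
      by_cases hb : a ∈ B
      · have := congrFun heq a
        simpa [projO, hb] using this
      · by_cases he : a ∈ E
        · have hae : a ∈ A ∪ E := Finset.mem_union_right _ he
          have := congrFun (h1v.trans h2v.symm) a
          simpa [hf, projO, hae] using this
        · have hnb : a ∉ B ∪ E := by simp [hb, he]
          simp [proj, hnb]
  calc Set.ncard (proj (B ∪ E) '' J) = s.card := by
        rw [hs, Set.ncard_eq_toFinset_card _ hfin]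
    _ ≤ d * (s.image f).card := hcard
    _ = Set.ncard (proj (A ∪ E) '' J) * d := by
        rw [mul_comm, ← hsimg, Set.ncard_coe_finset]
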